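/- arXiv:2208.00611 — 5 statements merged into one kernel-verified Lean document; each statement's English description precedes it below -/
import Mathlib

section
/- A finite group cannot have exactly two maximal cyclic subgroups. -/
def IsMaximalCyclic {G : Type*} [Group G] (M : Subgroup G) : Prop :=
  (∃ g : G, M = Subgroup.zpowers g) ∧
    ∀ N : Subgroup G, (∃ g : G, N = Subgroup.zpowers g) → M ≤ N → N = M

lemma exists_maximal_cyclic {G : Type*} [Group G] [Finite G] (g : G) :
    ∃ M : Subgroup G, IsMaximalCyclic M ∧ g ∈ M := by
  obtain ⟨M, hM, hmax⟩ := Set.Finite.exists_maximalFor id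
      {N : Subgroup G | (∃ x, N = Subgroup.zpowers x) ∧ g ∈ N} (Set.toFinite _)
      ⟨Subgroup.zpowers g, ⟨g, rfl⟩, Subgroup.mem_zpowers g⟩
  refine ⟨M, ⟨hM.1, ?_⟩, hM.2⟩
  rintro N ⟨x, hx⟩ hle
  exact le_antisymm (hmax ⟨⟨x, hx⟩, hle hM.2⟩ hle) hle

lemma not_union_two {G : Type*} [Group G] {A B : Subgroup G} (hA : A ≠ ⊤) (hB : B ≠ ⊤)
    (h : ∀ x : G, x ∈ A ∨ x ∈ B) : False := by
  obtain ⟨a, -, ha⟩ := SetLike.exists_of_lt (lt_top_iff_ne_top.mpr hA : A < ⊤)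
  obtain ⟨b, -, hb⟩ := SetLike.exists_of_lt (lt_top_iff_ne_top.mpr hB : B < ⊤)
  have haB : a ∈ B := (h a).resolve_left ha
  have hbA : b ∈ A := (h b).resolve_right hb
  rcases h (a * b) with hab | hab
  · exact ha (by simpa using A.mul_mem hab (A.inv_mem hbA))
  · exact hb (by simpa using B.mul_mem (B.inv_mem haB) hab)

theorem two_maximal_cyclic_impossible {G : Type*} [Group G] [Finite G] :
    Set.ncard {M : Subgroup G | IsMaximalCyclic M} ≠ 2 := by
  intro h
  obtain ⟨M1, M2, hne, hset⟩ := Set.ncard_eq_two.mp h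
  have hM1 : IsMaximalCyclic M1 := by
    have : M1 ∈ {M : Subgroup G | IsMaximalCyclic M} := by rw [hset]; exact Set.mem_insert _ _
    exact this
  have hM2 : IsMaximalCyclic M2 := by
    have : M2 ∈ {M : Subgroup G | IsMaximalCyclic M} := by
      rw [hset]; exact Set.mem_insert_of_mem _ rfl
    exact this
  have hcover : ∀ x : G, x ∈ M1 ∨ x ∈ M2 := by
    intro x
    obtain ⟨M, hM, hx⟩ := exists_maximal_cyclic x
    have : M ∈ ({M1, M2} : Set (Subgroup G)) := hset ▸ hM
    rcases this with h1 | h2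
    · exact Or.inl (h1 ▸ hx)
    · exact Or.inr (h2 ▸ hx)
  have htop : ∀ M : Subgroup G, IsMaximalCyclic M → M = ⊤ → M1 = M2 := by
    intro M hM hMt
    have hcyc : ∃ g : G, (⊤ : Subgroup G) = Subgroup.zpowers g := hMt ▸ hM.1
    have h1 : (⊤ : Subgroup G) = M1 := hM1.2 ⊤ hcyc le_top
    have h2 : (⊤ : Subgroup G) = M2 := hM2.2 ⊤ hcyc le_top
    exact h1 ▸ h2
  have hA : M1 ≠ ⊤ := fun ht => hne (htop M1 hM1 ht)
  have hB : M2 ≠ ⊤ := fun ht => hne (htop M2 hM2 ht)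
  exact not_union_two hA hB hcover
end

section
/- Let G be a finite non-cyclic simple group and let d1, d2 be orders of non-identity elements of G. For each element x of order d1 there exists an element y of order d2 such that x and y do not commute. -/
theorem simple_noncyclic_noncommuting {G : Type*} [Group G] [Finite G]
    [IsSimpleGroup G] (hG : ¬ IsCyclic G) (d₁ d₂ : ℕ)
    (g₁ : G) (hg₁ : g₁ ≠ 1) (hd₁ : orderOf g₁ = d₁)
    (g₂ : G) (hg₂ : g₂ ≠ 1) (hd₂ : orderOf g₂ = d₂)
    (x : G) (hx : orderOf x = d₁) :
    ∃ y : G, orderOf y = d₂ ∧ x * y ≠ y * x := by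
  by_contra h
  push_neg at h
  -- every conjugate of g₂ commutes with x
  have hconj : Group.conjugatesOfSet ({g₂} : Set G) ⊆ Subgroup.centralizer {x} := by
    intro y hy
    rw [Group.mem_conjugatesOfSet_iff] at hy
    obtain ⟨a, ha, hac⟩ := hy
    rw [Set.mem_singleton_iff] at ha
    subst ha
    have hy : orderOf y = d₂ := by
      obtain ⟨c, hc⟩ := isConj_iff.mp hac
      have hsc : SemiconjBy c a y := by
        rw [SemiconjBy, ← hc]; group
      rw [← hsc.orderOf_eq c, hd₂]
    rw [SetLike.mem_coe, Subgroup.mem_centralizer_iff]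
    intro m hm
    rw [Set.mem_singleton_iff] at hm
    subst hm
    exact h y hy
  have hle : Subgroup.normalClosure ({g₂} : Set G) ≤ Subgroup.centralizer {x} :=
    (Subgroup.closure_le _).2 hconj
  have htop : Subgroup.normalClosure ({g₂} : Set G) = ⊤ := by
    rcases (Subgroup.normalClosure_normal (s := ({g₂} : Set G))).eq_bot_or_eq_top with hb | ht
    · exfalso
      have : g₂ ∈ Subgroup.normalClosure ({g₂} : Set G) :=
        Subgroup.subset_normalClosure rfl
      rw [hb, Subgroup.mem_bot] at this
      exact hg₂ this
    · exact ht
  have hcent : Subgroup.centralizer ({x} : Set G) = ⊤ :=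
    top_le_iff.mp (htop ▸ hle)
  -- hence x is central
  have hxc : x ∈ Subgroup.center G := by
    rw [Subgroup.mem_center_iff]
    intro g
    have : g ∈ Subgroup.centralizer ({x} : Set G) := hcent ▸ Subgroup.mem_top g
    exact (Subgroup.mem_centralizer_iff.mp this x rfl).symm
  rcases (inferInstance : (Subgroup.center G).Normal).eq_bot_or_eq_top with hb | ht
  · rw [hb, Subgroup.mem_bot] at hxc
    subst hxc
    rw [orderOf_one] at hx
    exact hg₁ (orderOf_eq_one_iff.mp (hd₁.trans hx.symm))
  · have : ∀ a b : G, a * b = b * a := by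
      intro a b
      have : a ∈ Subgroup.center G := ht ▸ Subgroup.mem_top a
      exact (Subgroup.mem_center_iff.mp this b).symm
    exact hG (letI : CommGroup G := ⟨this⟩; IsSimpleGroup.isCyclic)
end

section
/- Let G be a finite non-cyclic group of order n. Then λ(P_E(G)) ≤ 2n − 4, with equality if and only if G ≅ ℤ/2 × ℤ/2. -/
def enhancedPowerGraph (G : Type*) [Group G] : SimpleGraph G where
  Adj x y := x ≠ y ∧ ∃ z : G, x ∈ Subgroup.zpowers z ∧ y ∈ Subgroup.zpowers z
  symm := by
    constructor
    rintro x y ⟨h, z, hx, hy⟩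
    exact ⟨h.symm, z, hy, hx⟩
  loopless := by
    constructor
    rintro x ⟨h, -⟩
    exact h rfl

noncomputable def lambdaNumber {V : Type*} (Γ : SimpleGraph V) : ℕ :=
  sInf {k : ℕ | ∃ f : V → ℕ, (∀ v, f v ≤ k) ∧
    (∀ u v, Γ.Adj u v → 2 ≤ Nat.dist (f u) (f v)) ∧
    (∀ u v, Γ.dist u v = 2 → 1 ≤ Nat.dist (f u) (f v))}

set_option linter.unusedSectionVars false

open Subgroup

section Aux

variable {G : Type*} [Group G] [Finite G]

/-- `Nc x y` : no cyclic subgroup contains both `x` and `y`. -/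
def Nc (x y : G) : Prop := ∀ z : G, ¬(x ∈ zpowers z ∧ y ∈ zpowers z)

lemma Nc.symm {x y : G} (h : Nc x y) : Nc y x := fun z hz => h z ⟨hz.2, hz.1⟩

lemma Nc.ne {x y : G} (h : Nc x y) : x ≠ y :=
  fun he => h y ⟨he ▸ mem_zpowers y, mem_zpowers y⟩

lemma Nc.ne_one_left {x y : G} (h : Nc x y) : x ≠ 1 :=
  fun he => h y ⟨he ▸ one_mem _, mem_zpowers y⟩

lemma Nc.ne_one_right {x y : G} (h : Nc x y) : y ≠ 1 := h.symm.ne_one_left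

lemma Nc.mul_right {x y : G} (h : Nc x y) : Nc x (x * y) := by
  intro z ⟨hx, hxy⟩
  exact h z ⟨hx, by simpa using mul_mem (inv_mem hx) hxy⟩

lemma Nc.mul_inv {x y : G} (h : Nc x y) : Nc (x * y) x⁻¹ := by
  intro z ⟨hxy, hxi⟩
  exact h z ⟨inv_mem_iff.mp hxi, by simpa using mul_mem hxi hxy⟩

lemma Nc.right_mul {x y : G} (h : Nc x y) : Nc y (x * y) := by
  intro z ⟨hy, hxy⟩
  exact h z ⟨by simpa using mul_mem hxy (inv_mem hy), hy⟩

lemma Nc.not_adj {x y : G} (h : Nc x y) : ¬ (enhancedPowerGraph G).Adj x y := by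
  rintro ⟨-, z, hz1, hz2⟩
  exact h z ⟨hz1, hz2⟩

/-- In a finite group that is not cyclic, some pair has no common cyclic subgroup. -/
lemma exists_nc (hG : ¬ IsCyclic G) : ∃ x y : G, Nc x y := by
  by_contra h
  push_neg at h
  simp only [Nc, not_forall, not_not] at h
  apply hG
  have : Fintype G := Fintype.ofFinite G
  have key : ∀ l : List G, ∃ z : G, ∀ x ∈ l, x ∈ zpowers z := by
    intro l
    induction l with
    | nil => exact ⟨1, by simp⟩
    | cons a l ih =>
      obtain ⟨z, hz⟩ := ih
      obtain ⟨w, hw⟩ := h a z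
      refine ⟨w, ?_⟩
      intro x hx
      rcases List.mem_cons.mp hx with rfl | hx
      · exact hw.1
      · exact zpowers_le.mpr hw.2 (hz x hx)
  obtain ⟨z, hz⟩ := key Finset.univ.toList
  exact ⟨z, fun x => hz x (by simp)⟩

/-- Case A: a chain of four distinct elements when `x` is not an involution. -/
lemma p4_of_sq_ne {x y : G} (h : Nc x y) (hx2 : x * x ≠ 1) :
    ∃ a b c d : G, a ≠ b ∧ a ≠ c ∧ a ≠ d ∧ b ≠ c ∧ b ≠ d ∧ c ≠ d ∧
      Nc a b ∧ Nc b c ∧ Nc c d := by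
  refine ⟨y, x, x * y, x⁻¹, h.ne.symm, ?_, ?_, ?_, ?_, ?_, h.symm, h.mul_right, h.mul_inv⟩
  · intro he
    rw [right_eq_mul] at he
    exact h.ne_one_left he
  · intro he
    exact h x ⟨mem_zpowers x, by rw [he]; exact inv_mem (mem_zpowers x)⟩
  · intro he
    exact h.ne_one_right (by rwa [left_eq_mul] at he)
  · intro he
    apply hx2
    nth_rewrite 2 [he]
    simp
  · intro he
    apply h x
    refine ⟨mem_zpowers x, ?_⟩
    have hy : y = x⁻¹ * x⁻¹ := by
      rw [← inv_mul_cancel_left x y, he]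
    rw [hy]
    exact mul_mem (inv_mem (mem_zpowers x)) (inv_mem (mem_zpowers x))

/-- A cyclic subgroup contains at most one nontrivial involution. -/
lemma invol_unique {w x t : G} (hx : x ∈ zpowers w) (ht : t ∈ zpowers w)
    (hx2 : x * x = 1) (ht2 : t * t = 1) (hx1 : x ≠ 1) (ht1 : t ≠ 1) : x = t := by
  by_contra hne
  have : Fintype G := Fintype.ofFinite G
  haveI : DecidableEq ↥(zpowers w) := Classical.decEq _
  haveI : Fintype ↥(zpowers w) := Fintype.ofFinite _
  haveI : IsCyclic ↥(zpowers w) := by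
    refine ⟨⟨⟨w, mem_zpowers w⟩, ?_⟩⟩
    rintro ⟨x, k, rfl⟩
    exact ⟨k, by ext; simp⟩
  have key := IsCyclic.card_pow_eq_one_le (α := ↥(zpowers w)) (n := 2) (by norm_num)
  have hsub : ({⟨1, one_mem _⟩, ⟨x, hx⟩, ⟨t, ht⟩} : Finset ↥(zpowers w)) ⊆
      Finset.univ.filter (fun a => a ^ 2 = 1) := by
    intro a ha
    simp only [Finset.mem_insert, Finset.mem_singleton] at ha
    rcases ha with rfl | rfl | rfl <;>
      · simp only [Finset.mem_filter, Finset.mem_univ, true_and]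
        ext
        push_cast [pow_two]
        simp [hx2, ht2]
  have hcard : ({⟨1, one_mem _⟩, ⟨x, hx⟩, ⟨t, ht⟩} : Finset ↥(zpowers w)).card = 3 := by
    rw [Finset.card_insert_of_notMem, Finset.card_insert_of_notMem, Finset.card_singleton]
    · simp [Subtype.ext_iff, hne]
    · simp [Subtype.ext_iff, hx1.symm, ht1.symm]
  have := Finset.card_le_card hsub
  omega

/-- Case B3 core. -/
lemma b3_core {x y z : G} (hxy : Nc x y) (hx2 : x * x = 1) (hy2 : y * y = 1)
    (hz1 : z ≠ 1)
    (w1 : G) (hzw1 : z ∈ zpowers w1) (hxw1 : x ∈ zpowers w1)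
    (w2 : G) (hzw2 : z ∈ zpowers w2) (hyw2 : y ∈ zpowers w2) :
    Nc (z * x) y ∧ (z * x) * (z * x) ≠ 1 := by
  have hx1 : x ≠ 1 := hxy.ne_one_left
  have hy1 : y ≠ 1 := hxy.ne_one_right
  have hxyne : x ≠ y := hxy.ne
  set n := orderOf z with hn
  have hnpos : 0 < n := orderOf_pos z
  have hodd : ¬ 2 ∣ n := by
    rintro ⟨m, hm⟩
    have hmpos : 0 < m := by omega
    have hmlt : m < n := by omega
    have ht2 : z ^ m * z ^ m = 1 := by
      rw [← pow_add]
      have hmm : m + m = n := by omega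
      rw [hmm]
      exact pow_orderOf_eq_one z
    have ht1 : z ^ m ≠ 1 := by
      intro h1
      have := orderOf_le_of_pow_eq_one hmpos h1
      omega
    have hx : x = z ^ m := invol_unique hxw1 (pow_mem hzw1 m) hx2 ht2 hx1 ht1
    have hy : y = z ^ m := invol_unique hyw2 (pow_mem hzw2 m) hy2 ht2 hy1 ht1
    exact hxyne (hx.trans hy.symm)
  have hcomm : z * x = x * z := by
    obtain ⟨i, hi⟩ := hzw1
    obtain ⟨j, hj⟩ := hxw1
    rw [← hi, ← hj, ← zpow_add, ← zpow_add, add_comm]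
  have hc : Commute z x := hcomm
  have hxn : x ^ n = x := by
    obtain ⟨k, hk⟩ : ∃ k, n = 2 * k + 1 := ⟨n / 2, by omega⟩
    rw [hk, pow_succ, pow_mul, pow_two, hx2, one_pow, one_mul]
  constructor
  · rintro w ⟨hzxw, hyw⟩
    have hxw : x ∈ zpowers w := by
      have hcn : (z * x) ^ n = z ^ n * x ^ n := hc.mul_pow n
      have : (z * x) ^ n = x := by
        rw [hcn, pow_orderOf_eq_one, one_mul, hxn]
      exact this ▸ pow_mem hzxw n
    exact hxy w ⟨hxw, hyw⟩
  · intro h1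
    have hzz : z * z = 1 := by
      have hsq : (z * x) * (z * x) = z * z := by
        calc (z * x) * (z * x) = z * (x * z) * x := by group
          _ = z * (z * x) * x := by rw [← hcomm]
          _ = (z * z) * (x * x) := by group
          _ = z * z := by rw [hx2, mul_one]
      rw [← hsq, h1]
    have hdvd : n ∣ 2 := orderOf_dvd_of_pow_eq_one (by rw [pow_two]; exact hzz)
    have : n = 1 := by
      rcases (Nat.dvd_prime Nat.prime_two).mp hdvd with h | h
      · exact h
      · exact absurd (h ▸ dvd_refl 2) (h ▸ hodd)
    exact hz1 (orderOf_eq_one_iff.mp this)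

lemma exists_P3 (hG : ¬ IsCyclic G) :
    ∃ a b c : G, a ≠ b ∧ a ≠ c ∧ b ≠ c ∧ Nc a b ∧ Nc b c := by
  obtain ⟨x, y, hxy⟩ := exists_nc hG
  refine ⟨y, x, x * y, hxy.ne.symm, ?_, ?_, hxy.symm, hxy.mul_right⟩
  · intro he
    rw [right_eq_mul] at he
    exact hxy.ne_one_left he
  · intro he
    exact hxy.ne_one_right (by rwa [left_eq_mul] at he)

lemma exists_P4 (hG : ¬ IsCyclic G) (h5 : 5 ≤ Nat.card G) :
    ∃ a b c d : G, a ≠ b ∧ a ≠ c ∧ a ≠ d ∧ b ≠ c ∧ b ≠ d ∧ c ≠ d ∧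
      Nc a b ∧ Nc b c ∧ Nc c d := by
  obtain ⟨x, y, hxy⟩ := exists_nc hG
  by_cases hx2 : x * x = 1
  swap
  · exact p4_of_sq_ne hxy hx2
  by_cases hy2 : y * y = 1
  swap
  · exact p4_of_sq_ne hxy.symm hy2
  have hx1 : x ≠ 1 := hxy.ne_one_left
  have hy1 : y ≠ 1 := hxy.ne_one_right
  have hxyne : x ≠ y := hxy.ne
  have : Fintype G := Fintype.ofFinite G
  haveI : DecidableEq G := Classical.decEq G
  obtain ⟨z, hz⟩ : ∃ z : G, z ∉ ({1, x, y, x * y} : Finset G) := by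
    by_contra h
    push_neg at h
    have hsub : (Finset.univ : Finset G) ⊆ {1, x, y, x * y} := fun u _ => h u
    have h1 := Finset.card_le_card hsub
    have h2 : ({1, x, y, x * y} : Finset G).card ≤ 4 := by
      apply le_trans (Finset.card_insert_le _ _)
      apply Nat.succ_le_succ
      apply le_trans (Finset.card_insert_le _ _)
      apply Nat.succ_le_succ
      apply le_trans (Finset.card_insert_le _ _)
      simp
    rw [Finset.card_univ, ← Nat.card_eq_fintype_card] at h1
    omega
  simp only [Finset.mem_insert, Finset.mem_singleton, not_or] at hz
  obtain ⟨hz1, hzx, hzy, hzxy⟩ := hz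
  by_cases hnczx : Nc z x
  · refine ⟨z, x, y, x * y, hzx, hzy, hzxy, hxyne, ?_, ?_, hnczx, hxy, hxy.right_mul⟩
    · intro he
      rw [left_eq_mul] at he
      exact hy1 he
    · intro he
      rw [right_eq_mul] at he
      exact hx1 he
  by_cases hnczy : Nc z y
  · refine ⟨z, y, x, x * y, hzy, hzx, hzxy, fun h => hxyne h.symm, ?_, ?_,
      hnczy, hxy.symm, hxy.mul_right⟩
    · intro he
      rw [right_eq_mul] at he
      exact hx1 he
    · intro he
      rw [left_eq_mul] at he
      exact hy1 he
  · simp only [Nc, not_forall, not_not] at hnczx hnczy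
    obtain ⟨w1, hzw1, hxw1⟩ := hnczx
    obtain ⟨w2, hzw2, hyw2⟩ := hnczy
    obtain ⟨hnc, hsq⟩ := b3_core hxy hx2 hy2 hz1 w1 hzw1 hxw1 w2 hzw2 hyw2
    exact p4_of_sq_ne hnc hsq

end Aux

lemma labeling_aux {V : Type*} (Γ : SimpleGraph V) (n t : ℕ) (E : V ≃ Fin n)
    (htn : t + 1 ≤ n)
    (hchain : ∀ i j : Fin n, (i : ℕ) + 1 = (j : ℕ) → (j : ℕ) ≤ t →
      ¬ Γ.Adj (E.symm i) (E.symm j)) :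
    ∃ f : V → ℕ, (∀ v, f v ≤ 2 * n - 2 - t) ∧
      (∀ u v, Γ.Adj u v → 2 ≤ Nat.dist (f u) (f v)) ∧
      (∀ u v, Γ.dist u v = 2 → 1 ≤ Nat.dist (f u) (f v)) := by
  refine ⟨fun v => if (E v : ℕ) ≤ t then (E v : ℕ) else 2 * (E v : ℕ) - t, ?_, ?_, ?_⟩
  · intro v
    have hv : (E v : ℕ) < n := (E v).isLt
    dsimp only
    split_ifs with h <;> omega
  · intro u v huv
    have hne : u ≠ v := huv.ne
    have hEne : (E u : ℕ) ≠ (E v : ℕ) := fun h => hne (E.injective (Fin.ext h))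
    by_contra hlt
    push_neg at hlt
    have hu : (E u : ℕ) < n := (E u).isLt
    have hv : (E v : ℕ) < n := (E v).isLt
    have key : ((E u : ℕ) + 1 = (E v : ℕ) ∧ (E v : ℕ) ≤ t) ∨
        ((E v : ℕ) + 1 = (E u : ℕ) ∧ (E u : ℕ) ≤ t) := by
      simp only [Nat.dist] at hlt
      split_ifs at hlt <;> omega
    rcases key with ⟨h1, h2⟩ | ⟨h1, h2⟩
    · exact hchain (E u) (E v) h1 h2 (by simpa using huv)
    · exact hchain (E v) (E u) h1 h2 (by simpa using huv.symm)
  · intro u v hd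
    have hne : u ≠ v := by
      rintro rfl
      simp [SimpleGraph.dist_self] at hd
    have hEne : (E u : ℕ) ≠ (E v : ℕ) := fun h => hne (E.injective (Fin.ext h))
    have hu : (E u : ℕ) < n := (E u).isLt
    have hv : (E v : ℕ) < n := (E v).isLt
    dsimp only
    simp only [Nat.dist]
    split_ifs <;> omega

lemma equiv_three {α : Type*} {n : ℕ} (hn : 4 ≤ n) (E0 : α ≃ Fin n) (a b c : α)
    (hab : a ≠ b) (hac : a ≠ c) (hbc : b ≠ c) :
    ∃ E : α ≃ Fin n, E a = ⟨0, by omega⟩ ∧ E b = ⟨1, by omega⟩ ∧ E c = ⟨2, by omega⟩ := by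
  set i0 : Fin n := ⟨0, by omega⟩
  set i1 : Fin n := ⟨1, by omega⟩
  set i2 : Fin n := ⟨2, by omega⟩
  have h01 : i0 ≠ i1 := by simp [i0, i1, Fin.ext_iff]
  have h02 : i0 ≠ i2 := by simp [i0, i2, Fin.ext_iff]
  have h12 : i1 ≠ i2 := by simp [i1, i2, Fin.ext_iff]
  set E1 : α ≃ Fin n := E0.trans (Equiv.swap (E0 a) i0) with hE1
  have hE1a : E1 a = i0 := by simp [E1, Equiv.swap_apply_left]
  set E2 : α ≃ Fin n := E1.trans (Equiv.swap (E1 b) i1) with hE2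
  have hE2b : E2 b = i1 := by simp [E2, Equiv.swap_apply_left]
  have hE2a : E2 a = i0 := by
    simp only [E2, Equiv.trans_apply, hE1a]
    exact Equiv.swap_apply_of_ne_of_ne (by rw [← hE1a]; exact fun h => hab (E1.injective h)) h01
  set E3 : α ≃ Fin n := E2.trans (Equiv.swap (E2 c) i2) with hE3
  have hE3c : E3 c = i2 := by simp [E3, Equiv.swap_apply_left]
  have hE3a : E3 a = i0 := by
    simp only [E3, Equiv.trans_apply, hE2a]
    exact Equiv.swap_apply_of_ne_of_ne (by rw [← hE2a]; exact fun h => hac (E2.injective h)) h02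
  have hE3b : E3 b = i1 := by
    simp only [E3, Equiv.trans_apply, hE2b]
    exact Equiv.swap_apply_of_ne_of_ne (by rw [← hE2b]; exact fun h => hbc (E2.injective h)) h12
  exact ⟨E3, hE3a, hE3b, hE3c⟩

lemma equiv_four {α : Type*} {n : ℕ} (hn : 5 ≤ n) (E0 : α ≃ Fin n) (a b c d : α)
    (hab : a ≠ b) (hac : a ≠ c) (had : a ≠ d) (hbc : b ≠ c) (hbd : b ≠ d) (hcd : c ≠ d) :
    ∃ E : α ≃ Fin n, E a = ⟨0, by omega⟩ ∧ E b = ⟨1, by omega⟩ ∧ E c = ⟨2, by omega⟩ ∧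
      E d = ⟨3, by omega⟩ := by
  obtain ⟨E3, ha3, hb3, hc3⟩ := equiv_three (by omega) E0 a b c hab hac hbc
  set i3 : Fin n := ⟨3, by omega⟩
  set E4 : α ≃ Fin n := E3.trans (Equiv.swap (E3 d) i3) with hE4
  have hd4 : E4 d = i3 := by simp [E4, Equiv.swap_apply_left]
  have key : ∀ (x : α) (i : Fin n), E3 x = i → x ≠ d → (i : ℕ) ≠ 3 → E4 x = i := by
    intro x i hx hxd hi3
    simp only [E4, Equiv.trans_apply, hx]
    exact Equiv.swap_apply_of_ne_of_ne
      (by rw [← hx]; exact fun h => hxd (E3.injective h))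
      (by simp [i3, Fin.ext_iff]; omega)
  exact ⟨E4, key a _ ha3 had (by simp), key b _ hb3 hbd (by simp), key c _ hc3 hcd (by simp), hd4⟩

section V4

abbrev K4V : Type := Multiplicative (ZMod 2) × Multiplicative (ZMod 2)

instance : IsKleinFour K4V where
  card_four := by simp [Nat.card_eq_fintype_card]
  exponent_two := by simp [Monoid.exponent_prod]

lemma K4V_sq : ∀ g : K4V, g * g = 1 := by decide

variable {G : Type*} [Group G] [Finite G]

lemma card_ge_four (hG : ¬ IsCyclic G) : 4 ≤ Nat.card G := by
  by_contra h
  push_neg at h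
  have h1 : 0 < Nat.card G := Nat.card_pos
  interval_cases hc : Nat.card G
  · exact hG (by
      have : Subsingleton G := (Nat.card_eq_one_iff_unique.mp hc).1
      infer_instance)
  · exact hG (isCyclic_of_prime_card (p := 2) hc)
  · exact hG (isCyclic_of_prime_card (p := 3) hc)

lemma klein_iso (hG : ¬ IsCyclic G) (h4 : Nat.card G = 4) :
    Nonempty (G ≃* K4V) := by
  have hsq : ∀ g : G, g ^ 2 = 1 := by
    intro g
    have hdvd : orderOf g ∣ 4 := h4 ▸ orderOf_dvd_natCard g
    have hne : orderOf g ≠ 4 := by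
      intro he
      exact hG (isCyclic_of_orderOf_eq_card g (by rw [he, h4]))
    have hpos : 0 < orderOf g := orderOf_pos g
    have hle : orderOf g ≤ 4 := Nat.le_of_dvd (by norm_num) hdvd
    interval_cases h : orderOf g
    · rw [orderOf_eq_one_iff.mp h]; simp
    · rw [← h]; exact pow_orderOf_eq_one g
    · norm_num at hdvd
    · exact absurd rfl hne
  have hnt : Nontrivial G := Finite.one_lt_card_iff_nontrivial.mp (by omega)
  obtain ⟨g, hg⟩ := exists_ne (1 : G)
  have hog : orderOf g = 2 := orderOf_eq_prime (hsq g) hg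
  have hexp : Monoid.exponent G = 2 := by
    refine Nat.dvd_antisymm (Monoid.exponent_dvd_of_forall_pow_eq_one hsq) ?_
    rw [← hog]
    exact Monoid.order_dvd_exponent g
  haveI : IsKleinFour G := ⟨h4, hexp⟩
  exact IsKleinFour.nonempty_mulEquiv

lemma zpowers_sq {w x : G} (hw : w * w = 1) (hx : x ∈ zpowers w) : x = 1 ∨ x = w := by
  obtain ⟨k, hk⟩ := hx
  have hk' : w ^ k = x := hk
  have h2 : w ^ (2 : ℤ) = 1 := by
    rw [show (2:ℤ) = 1 + 1 by norm_num, zpow_add, zpow_one, hw]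
  have hmm : w ^ k = w ^ (k % 2 + 2 * (k / 2)) := by rw [Int.emod_add_mul_ediv]
  rw [zpow_add, zpow_mul, h2, one_zpow, mul_one] at hmm
  have hmod : k % 2 = 0 ∨ k % 2 = 1 := by omega
  rcases hmod with h | h
  · left; rw [← hk', hmm, h, zpow_zero]
  · right; rw [← hk', hmm, h, zpow_one]

lemma not_adj_of_sq (hsq : ∀ g : G, g * g = 1) {x y : G}
    (hx : x ≠ 1) (hy : y ≠ 1) (hxy : x ≠ y) : ¬ (enhancedPowerGraph G).Adj x y := by
  rintro ⟨-, w, hxw, hyw⟩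
  rcases zpowers_sq (hsq w) hxw with h | h
  · exact hx h
  rcases zpowers_sq (hsq w) hyw with h' | h'
  · exact hy h'
  · exact hxy (h.trans h'.symm)

lemma adj_one {x : G} (hx : x ≠ 1) : (enhancedPowerGraph G).Adj 1 x :=
  ⟨fun h => hx h.symm, x, one_mem _, mem_zpowers x⟩

lemma dist_two_of_sq (hsq : ∀ g : G, g * g = 1) {x y : G}
    (hx : x ≠ 1) (hy : y ≠ 1) (hxy : x ≠ y) : (enhancedPowerGraph G).dist x y = 2 := by
  have hadj1 : (enhancedPowerGraph G).Adj x 1 := (adj_one hx).symm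
  have hadj2 : (enhancedPowerGraph G).Adj 1 y := adj_one hy
  have hwalk : (enhancedPowerGraph G).dist x y ≤ 2 := by
    simpa using SimpleGraph.dist_le
      (SimpleGraph.Walk.cons hadj1 (SimpleGraph.Walk.cons hadj2 SimpleGraph.Walk.nil))
  have h0 : (enhancedPowerGraph G).dist x y ≠ 0 := by
    intro hc
    rcases SimpleGraph.dist_eq_zero_iff_eq_or_not_reachable.mp hc with h | h
    · exact hxy h
    · exact h ⟨SimpleGraph.Walk.cons hadj1 (SimpleGraph.Walk.cons hadj2 SimpleGraph.Walk.nil)⟩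
  have h1 : (enhancedPowerGraph G).dist x y ≠ 1 := by
    intro hc
    exact not_adj_of_sq hsq hx hy hxy (SimpleGraph.dist_eq_one_iff_adj.mp hc)
  omega

end V4

theorem lambda_enhancedPowerGraph_noncyclic {G : Type*} [Group G] [Finite G]
    (hG : ¬ IsCyclic G) :
    lambdaNumber (enhancedPowerGraph G) ≤ 2 * Nat.card G - 4 ∧
      (lambdaNumber (enhancedPowerGraph G) = 2 * Nat.card G - 4 ↔
        Nonempty (G ≃* (Multiplicative (ZMod 2) × Multiplicative (ZMod 2)))) := by
  classical
  have h4 : 4 ≤ Nat.card G := card_ge_four hG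
  -- membership at 2n - 4 via a P₃ in the complement
  obtain ⟨a, b, c, hab, hac, hbc, hnab, hnbc⟩ := exists_P3 hG
  obtain ⟨E, hEa, hEb, hEc⟩ := equiv_three h4 (Finite.equivFin G) a b c hab hac hbc
  have hchain3 : ∀ i j : Fin (Nat.card G), (i : ℕ) + 1 = (j : ℕ) → (j : ℕ) ≤ 2 →
      ¬ (enhancedPowerGraph G).Adj (E.symm i) (E.symm j) := by
    intro i j hij hj
    have hi : (i : ℕ) = 0 ∨ (i : ℕ) = 1 := by omega
    rcases hi with hi | hi
    · have hieq : i = (⟨0, by omega⟩ : Fin (Nat.card G)) := Fin.ext hi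
      have hjeq : j = (⟨1, by omega⟩ : Fin (Nat.card G)) := Fin.ext (by simp; omega)
      rw [hieq, hjeq, ← hEa, ← hEb, E.symm_apply_apply, E.symm_apply_apply]
      exact hnab.not_adj
    · have hieq : i = (⟨1, by omega⟩ : Fin (Nat.card G)) := Fin.ext hi
      have hjeq : j = (⟨2, by omega⟩ : Fin (Nat.card G)) := Fin.ext (by simp; omega)
      rw [hieq, hjeq, ← hEb, ← hEc, E.symm_apply_apply, E.symm_apply_apply]
      exact hnbc.not_adj
  obtain ⟨f, hf1, hf2, hf3⟩ := labeling_aux (enhancedPowerGraph G) (Nat.card G) 2 E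
    (by omega) hchain3
  have hmem : (2 * Nat.card G - 4) ∈ {k : ℕ | ∃ f : G → ℕ, (∀ v, f v ≤ k) ∧
      (∀ u v, (enhancedPowerGraph G).Adj u v → 2 ≤ Nat.dist (f u) (f v)) ∧
      (∀ u v, (enhancedPowerGraph G).dist u v = 2 → 1 ≤ Nat.dist (f u) (f v))} := by
    refine ⟨f, fun v => ?_, hf2, hf3⟩
    have := hf1 v
    omega
  have hub : lambdaNumber (enhancedPowerGraph G) ≤ 2 * Nat.card G - 4 := Nat.sInf_le hmem
  refine ⟨hub, ?_, ?_⟩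
  · -- equality implies Klein four
    intro heq
    by_contra hno
    have h5 : 5 ≤ Nat.card G := by
      rcases eq_or_lt_of_le h4 with h | h
      · exact absurd (klein_iso hG h.symm) hno
      · omega
    obtain ⟨a', b', c', d', hab', hac', had', hbc', hbd', hcd', hnab', hnbc', hncd'⟩ :=
      exists_P4 hG h5
    obtain ⟨E', hEa', hEb', hEc', hEd'⟩ := equiv_four h5 (Finite.equivFin G) a' b' c' d'
      hab' hac' had' hbc' hbd' hcd'
    have hchain4 : ∀ i j : Fin (Nat.card G), (i : ℕ) + 1 = (j : ℕ) → (j : ℕ) ≤ 3 →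
        ¬ (enhancedPowerGraph G).Adj (E'.symm i) (E'.symm j) := by
      intro i j hij hj
      have hi : (i : ℕ) = 0 ∨ (i : ℕ) = 1 ∨ (i : ℕ) = 2 := by omega
      rcases hi with hi | hi | hi
      · have hieq : i = (⟨0, by omega⟩ : Fin (Nat.card G)) := Fin.ext hi
        have hjeq : j = (⟨1, by omega⟩ : Fin (Nat.card G)) := Fin.ext (by simp; omega)
        rw [hieq, hjeq, ← hEa', ← hEb', E'.symm_apply_apply, E'.symm_apply_apply]
        exact hnab'.not_adj
      · have hieq : i = (⟨1, by omega⟩ : Fin (Nat.card G)) := Fin.ext hi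
        have hjeq : j = (⟨2, by omega⟩ : Fin (Nat.card G)) := Fin.ext (by simp; omega)
        rw [hieq, hjeq, ← hEb', ← hEc', E'.symm_apply_apply, E'.symm_apply_apply]
        exact hnbc'.not_adj
      · have hieq : i = (⟨2, by omega⟩ : Fin (Nat.card G)) := Fin.ext hi
        have hjeq : j = (⟨3, by omega⟩ : Fin (Nat.card G)) := Fin.ext (by simp; omega)
        rw [hieq, hjeq, ← hEc', ← hEd', E'.symm_apply_apply, E'.symm_apply_apply]
        exact hncd'.not_adj
    obtain ⟨f', hf1', hf2', hf3'⟩ := labeling_aux (enhancedPowerGraph G) (Nat.card G) 3 E'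
      (by omega) hchain4
    have hmem' : (2 * Nat.card G - 5) ∈ {k : ℕ | ∃ f : G → ℕ, (∀ v, f v ≤ k) ∧
        (∀ u v, (enhancedPowerGraph G).Adj u v → 2 ≤ Nat.dist (f u) (f v)) ∧
        (∀ u v, (enhancedPowerGraph G).dist u v = 2 → 1 ≤ Nat.dist (f u) (f v))} := by
      refine ⟨f', fun v => ?_, hf2', hf3'⟩
      have := hf1' v
      omega
    have hub' : lambdaNumber (enhancedPowerGraph G) ≤ 2 * Nat.card G - 5 := Nat.sInf_le hmem'
    omega
  · -- Klein four implies equality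
    rintro ⟨iso⟩
    have hcard : Nat.card G = 4 := by
      rw [Nat.card_congr iso.toEquiv]
      simp [Nat.card_eq_fintype_card]
    have hsq : ∀ g : G, g * g = 1 := by
      intro g
      apply iso.injective
      rw [map_mul, map_one]
      exact K4V_sq _
    -- the three nontrivial elements
    set x1 : G := iso.symm (Multiplicative.ofAdd 1, 1) with hx1def
    set x2 : G := iso.symm (1, Multiplicative.ofAdd 1) with hx2def
    set x3 : G := iso.symm (Multiplicative.ofAdd 1, Multiplicative.ofAdd 1) with hx3def
    have hx1 : x1 ≠ 1 := fun h => by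
      have := iso.symm.injective (h.trans (map_one iso.symm).symm)
      revert this; decide
    have hx2 : x2 ≠ 1 := fun h => by
      have := iso.symm.injective (h.trans (map_one iso.symm).symm)
      revert this; decide
    have hx3 : x3 ≠ 1 := fun h => by
      have := iso.symm.injective (h.trans (map_one iso.symm).symm)
      revert this; decide
    have h12 : x1 ≠ x2 := fun h => by
      have := iso.symm.injective h
      revert this; decide
    have h13 : x1 ≠ x3 := fun h => by
      have := iso.symm.injective h
      revert this; decide
    have h23 : x2 ≠ x3 := fun h => by
      have := iso.symm.injective h
      revert this; decide
    have hlow : ∀ k ∈ {k : ℕ | ∃ f : G → ℕ, (∀ v, f v ≤ k) ∧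
        (∀ u v, (enhancedPowerGraph G).Adj u v → 2 ≤ Nat.dist (f u) (f v)) ∧
        (∀ u v, (enhancedPowerGraph G).dist u v = 2 → 1 ≤ Nat.dist (f u) (f v))}, 4 ≤ k := by
      rintro k ⟨f, hb, hadj, hdist⟩
      by_contra hk
      push_neg at hk
      have d1 := hadj 1 x1 (adj_one hx1)
      have d2 := hadj 1 x2 (adj_one hx2)
      have d3 := hadj 1 x3 (adj_one hx3)
      have e12 := hdist x1 x2 (dist_two_of_sq hsq hx1 hx2 h12)
      have e13 := hdist x1 x3 (dist_two_of_sq hsq hx1 hx3 h13)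
      have e23 := hdist x2 x3 (dist_two_of_sq hsq hx2 hx3 h23)
      have b0 := hb 1
      have b1 := hb x1
      have b2 := hb x2
      have b3 := hb x3
      simp only [Nat.dist] at d1 d2 d3 e12 e13 e23
      omega
    have hlb : 4 ≤ lambdaNumber (enhancedPowerGraph G) :=
      hlow _ (Nat.sInf_mem ⟨_, hmem⟩)
    omega
end

section
/- For a finite non-cyclic group G, the set G_M of elements generating some maximal cyclic subgroup has cardinality at least 3. -/
theorem maximal_cyclic_generators_ge_three {G : Type*} [Group G] [Finite G]
    (hG : ¬ IsCyclic G) :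
    3 ≤ Set.ncard {x : G | IsMaximalCyclic (Subgroup.zpowers x)} := by
  set S : Set G := {x : G | IsMaximalCyclic (Subgroup.zpowers x)} with hS
  -- every element lies in a maximal cyclic subgroup
  have key : ∀ x : G, ∃ m ∈ S, x ∈ Subgroup.zpowers m := by
    intro x
    obtain ⟨M, hle, hmax⟩ := Finite.exists_le_maximal
      (p := fun N : Subgroup G => ∃ g : G, N = Subgroup.zpowers g) ⟨x, rfl⟩
    obtain ⟨m, rfl⟩ := hmax.1
    refine ⟨m, ⟨⟨m, rfl⟩, fun N hN h => le_antisymm (hmax.2 hN h) h⟩,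
      hle (Subgroup.mem_zpowers x)⟩
  -- no zpowers is ⊤
  have hne : ∀ a : G, ∃ u : G, u ∉ Subgroup.zpowers a := by
    intro a
    by_contra h
    push_neg at h
    exact hG ⟨⟨a, fun x => h x⟩⟩
  by_contra hlt
  push_neg at hlt
  have hSfin : S.Finite := Set.toFinite S
  obtain ⟨a, haS, _⟩ := key 1
  have h1 : (S \ {a}).ncard ≤ 1 := by
    have := Set.ncard_diff_singleton_add_one haS hSfin
    omega
  have : Nonempty G := ⟨1⟩
  obtain ⟨b, hb⟩ := (Set.ncard_le_one_iff_subset_singleton hSfin.diff).mp h1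
  have hcover : ∀ x : G, x ∈ Subgroup.zpowers a ∨ x ∈ Subgroup.zpowers b := by
    intro x
    obtain ⟨m, hmS, hxm⟩ := key x
    rcases eq_or_ne m a with rfl | hma
    · exact Or.inl hxm
    · have : m ∈ ({b} : Set G) := hb ⟨hmS, hma⟩
      rw [Set.mem_singleton_iff] at this
      subst this
      exact Or.inr hxm
  obtain ⟨u, hu⟩ := hne a
  obtain ⟨v, hv⟩ := hne b
  have hub : u ∈ Subgroup.zpowers b := (hcover u).resolve_left hu
  have hva : v ∈ Subgroup.zpowers a := (hcover v).resolve_right hv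
  rcases hcover (u * v) with h | h
  · exact hu (by simpa using mul_mem h (inv_mem hva))
  · exact hv (by simpa using mul_mem (inv_mem hub) h)
end

section
/- A finite non-cyclic group G has exactly three elements generating maximal cyclic subgroups if and only if G ≅ ℤ/2 × ℤ/2. -/
section Aux

variable {G : Type*} [Group G] [Finite G]

open Subgroup

/-- Every element lies in some maximal cyclic subgroup. -/
lemma exists_mem_maximalCyclic (x : G) :
    ∃ g : G, x ∈ zpowers g ∧ IsMaximalCyclic (zpowers g) := by
  classical
  have := Fintype.ofFinite G
  obtain ⟨g, hgmem, hgmax⟩ := Finset.exists_max_image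
    (Finset.univ.filter fun g : G => x ∈ zpowers g) orderOf
    ⟨x, by simp [Subgroup.mem_zpowers]⟩
  simp only [Finset.mem_filter, Finset.mem_univ, true_and] at hgmem
  refine ⟨g, hgmem, ⟨g, rfl⟩, ?_⟩
  rintro N ⟨h, rfl⟩ hle
  have hx : x ∈ zpowers h := hle hgmem
  have hcard : orderOf h ≤ orderOf g := hgmax h (by simp [hx])
  refine (Subgroup.eq_of_le_of_card_ge hle ?_).symm
  rw [Nat.card_zpowers, Nat.card_zpowers]
  exact hcard

omit [Finite G] in
lemma one_notMem_maximalCyclic (hG : ¬ IsCyclic G) :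
    ¬ IsMaximalCyclic (zpowers (1 : G)) := by
  rintro ⟨-, hmax⟩
  apply hG
  have h1 : ∀ g : G, g = 1 := by
    intro g
    have h := hmax (zpowers g) ⟨g, rfl⟩ (by simp [Subgroup.zpowers_one_eq_bot])
    have : g ∈ zpowers (1 : G) := h ▸ Subgroup.mem_zpowers g
    simpa [Subgroup.zpowers_one_eq_bot, Subgroup.mem_bot] using this
  have : Subsingleton G := ⟨fun a b => by rw [h1 a, h1 b]⟩
  exact isCyclic_of_subsingleton

lemma sq_eq_one_of_ncard_eq_three (hG : ¬ IsCyclic G)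
    (hS : Set.ncard {x : G | IsMaximalCyclic (Subgroup.zpowers x)} = 3) :
    ∀ x : G, x ^ 2 = 1 := by
  set S := {x : G | IsMaximalCyclic (Subgroup.zpowers x)} with hSdef
  have hall : ∀ s ∈ S, s ^ 2 = 1 := by
    by_contra hc
    push_neg at hc
    obtain ⟨s, hs, hs2⟩ := hc
    have hs1 : s ≠ 1 := fun h => hs2 (by simp [h])
    have hsinv : s⁻¹ ≠ s := fun h => hs2 (by
      rw [pow_two]; nth_rewrite 1 [← h]; exact inv_mul_cancel s)
    -- there is an element outside `zpowers s`
    obtain ⟨z, hz⟩ : ∃ z, z ∉ zpowers s := by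
      by_contra h
      push_neg at h
      exact hG ⟨⟨s, h⟩⟩
    obtain ⟨g, hzg, hgmax⟩ := exists_mem_maximalCyclic z
    have hgs : zpowers g ≠ zpowers s := fun h => hz (h ▸ hzg)
    have hg : g ∈ S := hgmax
    have hginv : g⁻¹ ∈ S := by
      simpa only [hSdef, Set.mem_setOf_eq, Subgroup.zpowers_inv] using hg
    have hsinvS : s⁻¹ ∈ S := by
      simpa only [hSdef, Set.mem_setOf_eq, Subgroup.zpowers_inv] using hs
    have hgns : g ≠ s := fun h => hgs (by rw [h])
    have hgnsi : g ≠ s⁻¹ := fun h => hgs (by rw [h, Subgroup.zpowers_inv])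
    have hsng : s ≠ g := fun h => hgns h.symm
    have hsngi : s ≠ g⁻¹ := fun h => hgnsi (by rw [h, inv_inv])
    have hsing : s⁻¹ ≠ g := fun h => hgnsi h.symm
    have hsingi : s⁻¹ ≠ g⁻¹ := fun h => hsng (inv_injective h)
    -- if g ≠ g⁻¹ then S would have at least 4 elements
    have hgg : g⁻¹ = g := by
      by_contra hgg
      have h4 : ({s, s⁻¹, g, g⁻¹} : Set G) ⊆ S := by
        intro y hy
        rcases hy with rfl | rfl | rfl | rfl
        · exact hs
        · exact hsinvS
        · exact hg
        · exact hginv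
      have hne : g ≠ g⁻¹ := fun h => hgg h.symm
      have hc4 : ({s, s⁻¹, g, g⁻¹} : Set G).ncard = 4 := by
        rw [Set.ncard_insert_of_notMem (by simp [hsinv.symm, hsng, hsngi]),
          Set.ncard_insert_of_notMem (by simp [hsing, hsingi]),
          Set.ncard_insert_of_notMem (by simp [hne]), Set.ncard_singleton]
      have := Set.ncard_le_ncard h4 (Set.toFinite S)
      omega
    have hg2 : g ^ 2 = 1 := by
      rw [pow_two]; nth_rewrite 1 [← hgg]; exact inv_mul_cancel g
    have hg1 : g ≠ 1 := by
      rintro rfl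
      exact (one_notMem_maximalCyclic hG) hg
    -- S = {s, s⁻¹, g}
    have hSeq : ({s, s⁻¹, g} : Set G) = S := by
      apply Set.eq_of_subset_of_ncard_le
      · intro y hy
        rcases hy with rfl | rfl | rfl
        · exact hs
        · exact hsinvS
        · exact hg
      · rw [hS, Set.ncard_insert_of_notMem (by simp [hsinv.symm, hsng]),
          Set.ncard_insert_of_notMem (by simp [hsing]), Set.ncard_singleton]
      · exact Set.toFinite S
    -- consider u = s * g
    obtain ⟨h, hu, hmax⟩ := exists_mem_maximalCyclic (s * g)
    have hhS : h ∈ S := hmax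
    rw [← hSeq] at hhS
    have key : zpowers h = zpowers s → False := by
      intro hhs
      rw [hhs] at hu
      have hgmem : g ∈ zpowers s := by
        have : s⁻¹ * (s * g) ∈ zpowers s :=
          mul_mem (inv_mem (Subgroup.mem_zpowers s)) hu
        simpa using this
      have := hg.2 (zpowers s) ⟨s, rfl⟩ (Subgroup.zpowers_le.2 hgmem)
      exact hgs this.symm
    rcases hhS with hcase | hcase | hcase
    · exact key (by rw [hcase])
    · exact key (by rw [hcase, Subgroup.zpowers_inv])
    · -- s * g ∈ zpowers g with g of order 2
      rw [hcase] at hu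
      obtain ⟨k, hk⟩ := hu
      have hg2' : g ^ (2 : ℤ) = 1 := by
        rw [show (2 : ℤ) = ((2 : ℕ) : ℤ) by norm_num, zpow_natCast, hg2]
      rcases Int.even_or_odd k with ⟨m, rfl⟩ | ⟨m, rfl⟩
      · have hgk : g ^ (m + m) = (1 : G) := by
          rw [show m + m = 2 * m by ring, zpow_mul, hg2', one_zpow]
        have h1 : s * g = 1 := by rw [← hk]; exact hgk
        exact hgnsi (eq_inv_of_mul_eq_one_right h1)
      · have hgk : g ^ (2 * m + 1) = g := by
          rw [zpow_add, zpow_mul, hg2', one_zpow, one_mul, zpow_one]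
        have h1 : s * g = g := by rw [← hk]; exact hgk
        have hsg : s * g = 1 * g := by rw [one_mul, h1]
        exact hs1 (mul_right_cancel hsg)
  -- now every element has square one
  intro x
  obtain ⟨g, hxg, hgmax⟩ := exists_mem_maximalCyclic x
  have hg2 : g ^ 2 = 1 := hall g hgmax
  obtain ⟨k, rfl⟩ := hxg
  have hg2' : g ^ (2 : ℤ) = 1 := by
    rw [show (2 : ℤ) = ((2 : ℕ) : ℤ) by norm_num, zpow_natCast, hg2]
  calc (g ^ k) ^ 2 = g ^ (k * 2) := by rw [← zpow_natCast (g ^ k) 2, ← zpow_mul]; norm_num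
    _ = (g ^ (2 : ℤ)) ^ k := by rw [← zpow_mul, mul_comm]
    _ = 1 := by rw [hg2', one_zpow]

lemma maximalCyclic_set_eq (hG : ¬ IsCyclic G) (h2 : ∀ x : G, x ^ 2 = 1) :
    {x : G | IsMaximalCyclic (Subgroup.zpowers x)} = {x : G | x ≠ 1} := by
  ext x
  simp only [Set.mem_setOf_eq]
  constructor
  · rintro hx rfl
    exact one_notMem_maximalCyclic hG hx
  · intro hx
    have hord : orderOf x = 2 := orderOf_eq_prime (h2 x) hx
    refine ⟨⟨x, rfl⟩, ?_⟩
    rintro N ⟨h, rfl⟩ hle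
    refine (Subgroup.eq_of_le_of_card_ge hle ?_).symm
    rw [Nat.card_zpowers, Nat.card_zpowers, hord]
    exact Nat.le_of_dvd two_pos (orderOf_dvd_of_pow_eq_one (h2 h))

lemma card_eq_ncard_ne_one_add_one :
    Nat.card G = Set.ncard {x : G | x ≠ 1} + 1 := by
  have huniv : (Set.univ : Set G) = insert 1 {x : G | x ≠ 1} := by
    ext y
    simp only [Set.mem_univ, Set.mem_insert_iff, Set.mem_setOf_eq, true_iff]
    exact (em (y = 1)).imp id id
  rw [← Set.ncard_univ, huniv, Set.ncard_insert_of_notMem (by simp)]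

end Aux

theorem maximal_cyclic_generators_eq_three_iff_klein {G : Type*} [Group G] [Finite G]
    (hG : ¬ IsCyclic G) :
    Set.ncard {x : G | IsMaximalCyclic (Subgroup.zpowers x)} = 3 ↔
      Nonempty (G ≃* (Multiplicative (ZMod 2) × Multiplicative (ZMod 2))) := by
  constructor
  · intro hS
    have h2 := sq_eq_one_of_ncard_eq_three hG hS
    have hset := maximalCyclic_set_eq hG h2
    rw [hset] at hS
    have hcard : Nat.card G = 4 := by
      rw [card_eq_ncard_ne_one_add_one, hS]
    have hNT : Nontrivial G := Finite.one_lt_card_iff_nontrivial.mp (by omega)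
    have hexp : Monoid.exponent G = 2 := by
      have hdvd := Monoid.exponent_dvd_of_forall_pow_eq_one h2
      rcases (Nat.prime_two.eq_one_or_self_of_dvd _ hdvd) with h | h
      · exfalso
        obtain ⟨x, hx⟩ := exists_ne (1 : G)
        have := Monoid.pow_exponent_eq_one x
        rw [h, pow_one] at this
        exact hx this
      · exact h
    have : IsKleinFour G := ⟨hcard, hexp⟩
    obtain ⟨e⟩ := IsKleinFour.nonempty_mulEquiv
      (G₁ := G) (G₂ := Multiplicative (ZMod 2 × ZMod 2))
    exact ⟨e.trans (MulEquiv.prodMultiplicative (ZMod 2) (ZMod 2))⟩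
  · rintro ⟨e⟩
    have hK : ∀ y : Multiplicative (ZMod 2) × Multiplicative (ZMod 2), y ^ 2 = 1 := by decide
    have h2 : ∀ x : G, x ^ 2 = 1 := fun x => by
      apply e.injective
      rw [map_pow, map_one]
      exact hK _
    have hcardG : Nat.card G = 4 := by
      rw [Nat.card_congr e.toEquiv]
      simp [Nat.card_eq_fintype_card]
    rw [maximalCyclic_set_eq hG h2]
    have := card_eq_ncard_ne_one_add_one (G := G)
    omega
end
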